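/- Let Ω be a simply connected domain contained in the upper half-plane {Im w > 0}, convex in the positive direction and not contained in any horizontal strip, let h be a Koenigs map onto Ω, and suppose θ_Ω = Θ_Ω = θ for some θ ∈ (0,π). Then: (i) for every λ of the form λ = ρ e^{iφ} with ρ > 0 and φ ∈ (π/2, 3π/2 - θ) one has D(e^{λh}) < ∞; and (ii) if λ ≠ 0 and D(e^{λh}) < ∞, then λ = ρ e^{iφ} for some ρ > 0 and φ ∈ (π/2, 3π/2 - θ]. Equivalently, iS(0, π-θ) ∪ {0} ⊆ σ_D ⊆ iS(0, π-θ] ∪ {0}. (Theorem 1.3(b).) -/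

import Mathlib

open MeasureTheory Set Complex Metric
open scoped ENNReal NNReal

noncomputable section

/-- The Dirichlet integral `D(f) = ∫_𝔻 |f'(z)|² dA(z)` over the unit disk. -/
def dirichletIntegral (f : ℂ → ℂ) : ℝ≥0∞ :=
  ∫⁻ z in ball (0 : ℂ) 1, (‖deriv f z‖₊ : ℝ≥0∞) ^ 2

/-- `h` is a Koenigs map onto `Ω`: an injective holomorphic map on the unit disk with image `Ω`. -/
def IsKoenigsMap (h : ℂ → ℂ) (Ω : Set ℂ) : Prop :=
  DifferentiableOn ℂ h (ball 0 1) ∧ InjOn h (ball 0 1) ∧ h '' ball 0 1 = Ω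

/-- `Ω` is convex in the positive direction: `Ω + t ⊆ Ω` for all `t ≥ 0`. -/
def ConvexPosDir (Ω : Set ℂ) : Prop :=
  ∀ t : ℝ, 0 ≤ t → ∀ w ∈ Ω, w + (t : ℂ) ∈ Ω

/-- The open angular sector `S(α,β) = {w ≠ 0 : α < arg w < β}` (principal argument). -/
def sector (a b : ℝ) : Set ℂ :=
  {w : ℂ | w ≠ 0 ∧ a < Complex.arg w ∧ Complex.arg w < b}

/-- The inner argument `θ_Ω` of a domain contained in the upper half-plane. -/
def innerArg (Ω : Set ℂ) : ℝ :=
  sSup ({0} ∪ {θ : ℝ | θ ∈ Ioc 0 Real.pi ∧ ∃ q : ℂ, (fun w => q + w) '' sector 0 θ ⊆ Ω})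

/-- The outer argument `Θ_Ω` of a domain contained in the upper half-plane. -/
def outerArg (Ω : Set ℂ) : ℝ :=
  sInf {θ : ℝ | θ ∈ Ioc 0 Real.pi ∧ ∃ q : ℂ, Ω ⊆ (fun w => q + w) '' sector 0 θ}

lemma det_mul_aux (c : ℂ) :
    ((ContinuousLinearMap.smulRight (1 : ℂ →L[ℂ] ℂ) c).restrictScalars ℝ).det
      = Complex.normSq c := by
  have h1 : (((ContinuousLinearMap.smulRight (1 : ℂ →L[ℂ] ℂ) c).restrictScalars ℝ) :
      ℂ →ₗ[ℝ] ℂ) = (Algebra.lmul ℝ ℂ) c := by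
    ext v
    simp [mul_comm]
  change LinearMap.det _ = _
  rw [h1, ← Algebra.norm_apply, Algebra.norm_complex_apply]

lemma key_change {h : ℂ → ℂ} {Ω : Set ℂ} (hK : IsKoenigsMap h Ω) (lam : ℂ) :
    dirichletIntegral (fun z => Complex.exp (lam * h z))
      = ∫⁻ u in Ω, (‖lam‖₊ : ℝ≥0∞) ^ 2 * ENNReal.ofReal (Real.exp (2 * (lam * u).re)) := by
  obtain ⟨hdiff, hinj, him⟩ := hK
  have hs : MeasurableSet (ball (0:ℂ) 1) := measurableSet_ball
  set f' : ℂ → ℂ →L[ℝ] ℂ := fun z =>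
    (ContinuousLinearMap.smulRight (1 : ℂ →L[ℂ] ℂ) (deriv h z)).restrictScalars ℝ with hf'
  have hder : ∀ z ∈ ball (0:ℂ) 1, HasFDerivWithinAt h (f' z) (ball (0:ℂ) 1) z := by
    intro z hz
    have : HasDerivAt h (deriv h z) z :=
      ((hdiff z hz).differentiableAt (isOpen_ball.mem_nhds hz)).hasDerivAt
    exact (this.hasFDerivAt.restrictScalars ℝ).hasFDerivWithinAt
  rw [dirichletIntegral, ← him,
    lintegral_image_eq_lintegral_abs_det_fderiv_mul volume hs hder hinj]
  apply setLIntegral_congr_fun hs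
  intro z hz
  dsimp only
  have hdz : HasDerivAt h (deriv h z) z :=
    ((hdiff z hz).differentiableAt (isOpen_ball.mem_nhds hz)).hasDerivAt
  have hF : HasDerivAt (fun z => Complex.exp (lam * h z))
      (Complex.exp (lam * h z) * (lam * deriv h z)) z := (hdz.const_mul lam).cexp
  rw [hF.deriv, det_mul_aux, _root_.abs_of_nonneg (Complex.normSq_nonneg _)]
  have hnorm : ‖Complex.exp (lam * h z) * (lam * deriv h z)‖ ^ 2
      = Complex.normSq (deriv h z) * (‖lam‖ ^ 2 * Real.exp (2 * (lam * h z).re)) := by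
    rw [norm_mul, norm_mul, Complex.norm_exp,
      Complex.normSq_eq_norm_sq, two_mul, Real.exp_add]
    ring
  calc ((‖Complex.exp (lam * h z) * (lam * deriv h z)‖₊ : ℝ≥0∞)) ^ 2
      = ENNReal.ofReal (‖Complex.exp (lam * h z) * (lam * deriv h z)‖ ^ 2) := by
        rw [ENNReal.ofReal_pow (norm_nonneg _), ofReal_norm, enorm_eq_nnnorm]
    _ = ENNReal.ofReal (Complex.normSq (deriv h z) * (‖lam‖ ^ 2 * Real.exp (2 * (lam * h z).re))) := by
        rw [hnorm]
    _ = ENNReal.ofReal (Complex.normSq (deriv h z))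
          * ((‖lam‖₊ : ℝ≥0∞) ^ 2 * ENNReal.ofReal (Real.exp (2 * (lam * h z).re))) := by
        rw [ENNReal.ofReal_mul (Complex.normSq_nonneg _),
          ENNReal.ofReal_mul (by positivity : (0:ℝ) ≤ ‖lam‖ ^ 2),
          ENNReal.ofReal_pow (norm_nonneg _), ofReal_norm, enorm_eq_nnnorm]

lemma oneD_exp_finite {c : ℝ} (hc : 0 < c) :
    ∫⁻ x : ℝ, ENNReal.ofReal (Real.exp (-c * |x|)) < ⊤ := by
  have hIoi : ∫⁻ x in Ioi (0:ℝ), ENNReal.ofReal (Real.exp (-c * x)) < ⊤ := by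
    have hint : IntegrableOn (fun x => Real.exp (-c * x)) (Ioi (0:ℝ)) :=
      exp_neg_integrableOn_Ioi 0 hc
    have := hint.2
    rw [HasFiniteIntegral] at this
    refine lt_of_eq_of_lt ?_ this
    apply lintegral_congr
    intro x
    rw [← ofReal_norm, Real.norm_eq_abs, _root_.abs_of_nonneg (Real.exp_pos _).le]
  have hsplit : ∫⁻ x : ℝ, ENNReal.ofReal (Real.exp (-c * |x|))
      = (∫⁻ x in Iio (0:ℝ), ENNReal.ofReal (Real.exp (-c * |x|)))
        + ∫⁻ x in Ici (0:ℝ), ENNReal.ofReal (Real.exp (-c * |x|)) := by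
    rw [← lintegral_add_compl (μ := volume)
      (f := fun x => ENNReal.ofReal (Real.exp (-c * |x|))) measurableSet_Iio, compl_Iio]
  rw [hsplit]
  have h1 : ∫⁻ x in Ici (0:ℝ), ENNReal.ofReal (Real.exp (-c * |x|)) < ⊤ := by
    have heq : ∫⁻ x in Ici (0:ℝ), ENNReal.ofReal (Real.exp (-c * |x|))
        = ∫⁻ x in Ici (0:ℝ), ENNReal.ofReal (Real.exp (-c * x)) := by
      apply setLIntegral_congr_fun measurableSet_Ici
      intro x (hx : (0:ℝ) ≤ x)
      dsimp only
      rw [_root_.abs_of_nonneg hx]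
    rw [heq]
    have : (Ici (0:ℝ)) =ᵐ[volume] (Ioi (0:ℝ)) := Ioi_ae_eq_Ici.symm
    rwa [setLIntegral_congr this]
  have h2 : ∫⁻ x in Iio (0:ℝ), ENNReal.ofReal (Real.exp (-c * |x|)) < ⊤ := by
    have hmp : MeasurePreserving (fun x : ℝ => -x) volume volume :=
      Measure.measurePreserving_neg volume
    have hpre : (fun x : ℝ => -x) ⁻¹' (Ioi (0:ℝ)) = Iio (0:ℝ) := by
      ext x; simp
    have := hmp.setLIntegral_comp_preimage (s := Ioi (0:ℝ)) measurableSet_Ioi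
      (f := fun y => ENNReal.ofReal (Real.exp (-c * y)))
      (by fun_prop)
    rw [hpre] at this
    have heq : ∫⁻ x in Iio (0:ℝ), ENNReal.ofReal (Real.exp (-c * |x|))
        = ∫⁻ x in Iio (0:ℝ), ENNReal.ofReal (Real.exp (-c * -x)) := by
      apply setLIntegral_congr_fun measurableSet_Iio
      intro x (hx : x < (0:ℝ))
      dsimp only
      rw [abs_of_nonpos (le_of_lt hx)]
    rw [heq, this]
    exact hIoi
  exact ENNReal.add_lt_top.mpr ⟨h2, h1⟩

lemma planar_exp_finite {c : ℝ} (hc : 0 < c) :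
    ∫⁻ u : ℂ, ENNReal.ofReal (Real.exp (-c * |u.re|)) * ENNReal.ofReal (Real.exp (-c * |u.im|))
      < ⊤ := by
  have hmp := Complex.volume_preserving_equiv_real_prod
  have hmeas : Measurable (fun p : ℝ × ℝ =>
      ENNReal.ofReal (Real.exp (-c * |p.1|)) * ENNReal.ofReal (Real.exp (-c * |p.2|))) := by
    fun_prop
  have := hmp.lintegral_comp hmeas
  have heq : ∫⁻ u : ℂ, ENNReal.ofReal (Real.exp (-c * |u.re|))
      * ENNReal.ofReal (Real.exp (-c * |u.im|)) = ∫⁻ p : ℝ × ℝ,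
      ENNReal.ofReal (Real.exp (-c * |p.1|)) * ENNReal.ofReal (Real.exp (-c * |p.2|)) := by
    rw [← this]
    rfl
  rw [heq, Measure.volume_eq_prod]
  rw [lintegral_prod_mul (f := fun x : ℝ => ENNReal.ofReal (Real.exp (-c * |x|)))
    (g := fun y : ℝ => ENNReal.ofReal (Real.exp (-c * |y|))) (by fun_prop) (by fun_prop)]
  exact ENNReal.mul_lt_top (oneD_exp_finite hc) (oneD_exp_finite hc)

lemma polar_mul (ρ φ r α : ℝ) :
    ((ρ:ℂ) * Complex.exp ((φ:ℂ) * Complex.I)) * ((r:ℂ) * Complex.exp ((α:ℂ) * Complex.I))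
      = ((ρ * r : ℝ) : ℂ) * Complex.exp (((φ + α : ℝ) : ℂ) * Complex.I) := by
  push_cast
  rw [show ((φ:ℂ) + α) * Complex.I = (φ:ℂ) * Complex.I + (α:ℂ) * Complex.I by ring,
    Complex.exp_add]
  ring

lemma re_polar (r x : ℝ) : (((r:ℝ):ℂ) * Complex.exp ((x:ℂ) * Complex.I)).re
    = r * Real.cos x := by
  rw [Complex.re_ofReal_mul, Complex.exp_ofReal_mul_I_re]

lemma cos_bound {φ b α : ℝ} (hφ : Real.pi / 2 < φ) (hα0 : 0 ≤ α) (hαb : α ≤ b)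
    (hfb : φ + b < 3 * Real.pi / 2) :
    Real.cos (φ + α) ≤ max (Real.cos φ) (Real.cos (φ + b)) := by
  rcases le_total (φ + α) Real.pi with hle | hge
  · refine le_max_of_le_left ?_
    apply Real.cos_le_cos_of_nonneg_of_le_pi (by linarith [Real.pi_pos]) hle (by linarith)
  · refine le_max_of_le_right ?_
    have h1 : Real.cos (φ + α) = Real.cos (2 * Real.pi - (φ + α)) :=
      (Real.cos_two_pi_sub _).symm
    have h2 : Real.cos (φ + b) = Real.cos (2 * Real.pi - (φ + b)) :=
      (Real.cos_two_pi_sub _).symm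
    rw [h1, h2]
    apply Real.cos_le_cos_of_nonneg_of_le_pi (by linarith) (by linarith) (by linarith)

lemma re_le_of_sector {q : ℂ} {ρ φ b : ℝ} (hρ : 0 < ρ) (hφ : Real.pi / 2 < φ)
    (hb0 : 0 < b) (hfb : φ + b < 3 * Real.pi / 2) {u : ℂ}
    (hu : u ∈ (fun w => q + w) '' sector 0 b) :
    ((((ρ:ℂ) * Complex.exp ((φ:ℂ) * Complex.I)) * u).re :ℝ) ≤
      (((ρ:ℂ) * Complex.exp ((φ:ℂ) * Complex.I)) * q).re
        - ρ * (min (-Real.cos φ) (-Real.cos (φ + b))) * ‖u - q‖ := by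
  set lam := (ρ:ℂ) * Complex.exp ((φ:ℂ) * Complex.I) with hlam
  obtain ⟨w, hw, rfl⟩ := hu
  obtain ⟨hw0, hwa, hwb⟩ := hw
  have habs : (0:ℝ) < ‖w‖ := by
    exact norm_pos_iff.mpr hw0
  have hwrep : w = ((‖w‖ : ℝ):ℂ) * Complex.exp ((Complex.arg w : ℂ) * Complex.I) :=
    (Complex.norm_mul_exp_arg_mul_I w).symm
  have hre : (lam * w).re = ρ * ‖w‖ * Real.cos (φ + Complex.arg w) := by
    conv_lhs => rw [hlam, hwrep, polar_mul]
    rw [re_polar]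
  have hcos : Real.cos (φ + Complex.arg w) ≤ - min (-Real.cos φ) (-Real.cos (φ + b)) := by
    have := cos_bound hφ (le_of_lt hwa) (le_of_lt hwb) hfb
    rw [min_neg_neg, neg_neg]
    exact this
  have habs2 : ‖q + w - q‖ = ‖w‖ := by ring_nf
  rw [mul_add, Complex.add_re, habs2, hre]
  have : ρ * ‖w‖ * Real.cos (φ + Complex.arg w)
      ≤ ρ * ‖w‖ * (- min (-Real.cos φ) (-Real.cos (φ + b))) :=
    mul_le_mul_of_nonneg_left hcos (by positivity)
  linarith [this]

lemma upper_finite {Ω : Set ℂ} (hΩ : MeasurableSet Ω) {q : ℂ} {ρ φ b : ℝ} (hρ : 0 < ρ)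
    (hφ : Real.pi / 2 < φ) (hb0 : 0 < b) (hfb : φ + b < 3 * Real.pi / 2)
    (hsub : Ω ⊆ (fun w => q + w) '' sector 0 b) :
    ∫⁻ u in Ω, (‖(ρ:ℂ) * Complex.exp ((φ:ℂ) * Complex.I)‖₊ : ℝ≥0∞) ^ 2
      * ENNReal.ofReal (Real.exp (2 * (((ρ:ℂ) * Complex.exp ((φ:ℂ) * Complex.I)) * u).re))
      < ⊤ := by
  set lam := (ρ:ℂ) * Complex.exp ((φ:ℂ) * Complex.I) with hlam
  set c := ρ * min (-Real.cos φ) (-Real.cos (φ + b)) with hc'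
  have hcosφ : Real.cos φ < 0 :=
    Real.cos_neg_of_pi_div_two_lt_of_lt hφ (by linarith)
  have hcosφb : Real.cos (φ + b) < 0 :=
    Real.cos_neg_of_pi_div_two_lt_of_lt (by linarith) (by linarith)
  have hc : 0 < c := by
    apply mul_pos hρ
    simp only [lt_min_iff]
    constructor <;> linarith
  set C : ℝ≥0∞ := (‖lam‖₊ : ℝ≥0∞) ^ 2 * ENNReal.ofReal (Real.exp (2 * (lam * q).re)) with hC
  have hCne : C ≠ ⊤ := by
    apply ENNReal.mul_ne_top
    · exact (ENNReal.pow_ne_top ENNReal.coe_ne_top)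
    · exact ENNReal.ofReal_ne_top
  have key : ∫⁻ u in Ω, (‖lam‖₊ : ℝ≥0∞) ^ 2 * ENNReal.ofReal (Real.exp (2 * (lam * u).re))
      ≤ ∫⁻ u : ℂ, C * (ENNReal.ofReal (Real.exp (-c * |(u - q).re|))
        * ENNReal.ofReal (Real.exp (-c * |(u - q).im|))) := by
    refine le_trans (setLIntegral_mono' hΩ ?_) (setLIntegral_le_lintegral _ _)
    intro u hu
    have hle := re_le_of_sector (q := q) hρ hφ hb0 hfb (hsub hu)
    have habs_re : |(u - q).re| ≤ ‖u - q‖ := Complex.abs_re_le_norm _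
    have habs_im : |(u - q).im| ≤ ‖u - q‖ := Complex.abs_im_le_norm _
    rw [hC]
    have hmain : ENNReal.ofReal (Real.exp (2 * (lam * u).re))
        ≤ ENNReal.ofReal (Real.exp (2 * (lam * q).re))
          * (ENNReal.ofReal (Real.exp (-c * |(u - q).re|))
            * ENNReal.ofReal (Real.exp (-c * |(u - q).im|))) := by
      rw [← ENNReal.ofReal_mul (Real.exp_pos _).le, ← Real.exp_add,
        ← ENNReal.ofReal_mul (Real.exp_pos _).le, ← Real.exp_add]
      apply ENNReal.ofReal_le_ofReal
      apply Real.exp_le_exp.mpr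
      nlinarith [hc.le, norm_nonneg (u - q)]
    refine le_trans (mul_le_mul_right hmain ((‖lam‖₊ : ℝ≥0∞) ^ 2)) (le_of_eq (by ring))
  have h2 : ∫⁻ u : ℂ, C * (ENNReal.ofReal (Real.exp (-c * |(u - q).re|))
      * ENNReal.ofReal (Real.exp (-c * |(u - q).im|))) < ⊤ := by
    rw [lintegral_const_mul' _ _ hCne]
    apply ENNReal.mul_lt_top hCne.lt_top
    have : ∀ u : ℂ, u - q = u + (-q) := fun u => sub_eq_add_neg u q
    simp_rw [this]
    rw [lintegral_add_right_eq_self (fun v : ℂ => ENNReal.ofReal (Real.exp (-c * |v.re|))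
      * ENNReal.ofReal (Real.exp (-c * |v.im|))) (-q)]
    exact planar_exp_finite hc
  exact lt_of_le_of_lt key h2

lemma arg_polar {r x : ℝ} (hr : 0 < r) (hx : x ∈ Ioc (-Real.pi) Real.pi) :
    Complex.arg ((r:ℂ) * Complex.exp ((x:ℂ) * Complex.I)) = x := by
  rw [Complex.exp_mul_I]
  exact Complex.arg_mul_cos_add_sin_mul_I hr hx

lemma divergence_lemma {Ω : Set ℂ} {lam q : ℂ} {γ a : ℝ} (hlam : lam ≠ 0) (hγ : 0 ≤ γ)
    (hγa : γ < a) (ha : a ≤ Real.pi) (hcos : 0 ≤ Real.cos (Complex.arg lam + γ))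
    (hsub : (fun w => q + w) '' sector 0 a ⊆ Ω) :
    ∫⁻ u in Ω, (‖lam‖₊ : ℝ≥0∞) ^ 2 * ENNReal.ofReal (Real.exp (2 * (lam * u).re)) = ⊤ := by
  set g : ℂ → ℝ≥0∞ :=
    fun u => (‖lam‖₊ : ℝ≥0∞) ^ 2 * ENNReal.ofReal (Real.exp (2 * (lam * u).re)) with hg
  set σ := min (a - γ) (Real.pi / 2) with hσ'
  have hσ0 : 0 < σ := lt_min (by linarith) (by positivity)
  have hσπ2 : σ ≤ Real.pi / 2 := min_le_right _ _
  have hsin : 0 < Real.sin σ :=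
    Real.sin_pos_of_pos_of_lt_pi hσ0 (by linarith [Real.pi_pos])
  set M := 2 / Real.sin σ with hM'
  have hM : 0 < M := by positivity
  have hMsin : Real.sin σ * M = 2 := by
    rw [hM', mul_div_cancel₀ _ (ne_of_gt hsin)]
  set e := Complex.exp ((γ:ℂ) * Complex.I) with he'
  have he0 : e ≠ 0 := Complex.exp_ne_zero _
  set s₀ : Set ℂ := Complex.re ⁻¹' Ioi M ∩ Complex.im ⁻¹' Ioo 0 1 with hs₀'
  have hs₀meas : MeasurableSet s₀ :=
    (measurableSet_Ioi.preimage Complex.measurable_re).inter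
      (measurableSet_Ioo.preimage Complex.measurable_im)
  set Φ : ℂ → ℂ := fun z => q + e * z with hΦ'
  -- image of the strip is inside Ω
  have himg : Φ '' s₀ ⊆ Ω := by
    rintro _ ⟨z, hz, rfl⟩
    obtain ⟨hzre, hzim⟩ := hz
    simp only [mem_preimage, mem_Ioi, mem_Ioo] at hzre hzim
    have hz0 : z ≠ 0 := by
      intro hz0
      rw [hz0] at hzim
      simp at hzim
    have habs : 0 < ‖z‖ := norm_pos_iff.mpr hz0
    have hre_abs : z.re ≤ ‖z‖ := Complex.re_le_norm z
    have hα : Complex.arg z = Real.arcsin (z.im / ‖z‖) :=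
      Complex.arg_of_re_nonneg (by linarith)
    have hαpos : 0 < Complex.arg z := by
      rw [hα]
      exact Real.arcsin_pos.mpr (div_pos hzim.1 habs)
    have hratio : z.im / ‖z‖ < Real.sin σ := by
      rw [div_lt_iff₀ habs]
      nlinarith [hzim.2, hzim.1]
    have hαlt : Complex.arg z < σ := by
      rw [hα]
      have h1 : z.im / ‖z‖ ∈ Icc (-1 : ℝ) 1 := by
        constructor
        · have : 0 ≤ z.im / ‖z‖ := le_of_lt (div_pos hzim.1 habs)
          linarith
        · rw [div_le_one habs]
          exact le_trans (le_abs_self _) (Complex.abs_im_le_norm z)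
      have h2 : Real.sin σ ∈ Icc (-1 : ℝ) 1 := ⟨Real.neg_one_le_sin σ, Real.sin_le_one σ⟩
      have := Real.strictMonoOn_arcsin h1 h2 hratio
      rwa [Real.arcsin_sin (by linarith) hσπ2] at this
    have hwrep : e * z = ((‖z‖ : ℝ) : ℂ)
        * Complex.exp (((γ + Complex.arg z : ℝ) : ℂ) * Complex.I) := by
      conv_lhs => rw [← Complex.norm_mul_exp_arg_mul_I z]
      rw [mul_comm e, mul_assoc, ← Complex.exp_add]
      congr 2
      push_cast
      ring
    have hargw : Complex.arg (e * z) = γ + Complex.arg z := by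
      rw [hwrep]
      exact arg_polar habs ⟨by nlinarith [Real.pi_pos], by
        have : γ + Complex.arg z < γ + σ := by linarith
        have hσa : σ ≤ a - γ := min_le_left _ _
        linarith⟩
    apply hsub
    refine ⟨e * z, ⟨mul_ne_zero he0 hz0, ?_, ?_⟩, rfl⟩
    · rw [hargw]; linarith
    · rw [hargw]
      have hσa : σ ≤ a - γ := min_le_left _ _
      linarith
  -- derivative data for Φ
  have hder : ∀ z ∈ s₀, HasFDerivWithinAt Φ
      ((ContinuousLinearMap.smulRight (1 : ℂ →L[ℂ] ℂ) e).restrictScalars ℝ) s₀ z := by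
    intro z hz
    have h1 : HasDerivAt Φ e z := by
      simpa [hΦ'] using ((hasDerivAt_id z).const_mul e).const_add q
    exact (h1.hasFDerivAt.restrictScalars ℝ).hasFDerivWithinAt
  have hinj : InjOn Φ s₀ := by
    intro x _ y _ hxy
    simp only [hΦ'] at hxy
    exact mul_left_cancel₀ he0 (add_left_cancel hxy)
  have hchange : ∫⁻ u in Φ '' s₀, g u
      = ∫⁻ z in s₀, ENNReal.ofReal |Complex.normSq e| * g (Φ z) := by
    have := lintegral_image_eq_lintegral_abs_det_fderiv_mul volume hs₀meas hder hinj g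
    simpa [det_mul_aux] using this
  have hnsq : Complex.normSq e = 1 := by
    rw [Complex.normSq_eq_norm_sq, he', Complex.norm_exp_ofReal_mul_I]
    norm_num
  -- lower bound for the integrand on the strip
  set K : ℝ := (lam * q).re - ‖lam‖ with hK'
  have hlow : ∀ z ∈ s₀, ENNReal.ofReal (Real.exp (2 * K)) ≤ ENNReal.ofReal
      (Real.exp (2 * (lam * Φ z).re)) := by
    intro z hz
    obtain ⟨hzre, hzim⟩ := hz
    simp only [mem_preimage, mem_Ioi, mem_Ioo] at hzre hzim
    apply ENNReal.ofReal_le_ofReal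
    apply Real.exp_le_exp.mpr
    have hμrep : lam * e = ((‖lam‖ : ℝ) : ℂ)
        * Complex.exp (((Complex.arg lam + γ : ℝ) : ℂ) * Complex.I) := by
      conv_lhs => rw [← Complex.norm_mul_exp_arg_mul_I lam]
      rw [mul_assoc, ← Complex.exp_add]
      congr 2
      push_cast
      ring
    have hμre : (lam * e).re = ‖lam‖ * Real.cos (Complex.arg lam + γ) := by
      rw [hμrep, Complex.re_ofReal_mul, Complex.exp_ofReal_mul_I_re]
    have hμre0 : 0 ≤ (lam * e).re := by
      rw [hμre]
      exact mul_nonneg (norm_nonneg lam) hcos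
    have hμim : |(lam * e).im| ≤ ‖lam‖ := by
      calc |(lam * e).im| ≤ ‖lam * e‖ := Complex.abs_im_le_norm _
        _ = ‖lam‖ * ‖e‖ := norm_mul _ _
        _ = ‖lam‖ := by rw [he', Complex.norm_exp_ofReal_mul_I, mul_one]
    have hmulre : (lam * Φ z).re = (lam * q).re + ((lam * e).re * z.re
        - (lam * e).im * z.im) := by
      have hexp : lam * Φ z = lam * q + (lam * e) * z := by rw [hΦ']; ring
      rw [hexp, Complex.add_re, Complex.mul_re (lam * e) z]
    rw [hmulre, hK']
    have h1 : 0 ≤ (lam * e).re * z.re := mul_nonneg hμre0 (by linarith)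
    have h2 : (lam * e).im * z.im ≤ ‖lam‖ := by
      rcases le_or_gt ((lam * e).im) 0 with hneg | hpos
      · have : (lam * e).im * z.im ≤ 0 := mul_nonpos_of_nonpos_of_nonneg hneg hzim.1.le
        linarith [norm_nonneg lam]
      · have : (lam * e).im * z.im ≤ (lam * e).im := by
          nlinarith [hzim.2, hzim.1]
        have h3 : (lam * e).im ≤ |(lam * e).im| := le_abs_self _
        linarith
    linarith
  -- strip has infinite volume
  have hvol : volume s₀ = ⊤ := by
    have hset : s₀ = Complex.measurableEquivRealProd ⁻¹' (Ioi M ×ˢ Ioo (0:ℝ) 1) := by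
      ext z
      simp [hs₀', Complex.measurableEquivRealProd_apply, Set.mem_prod]
    rw [hset, Complex.volume_preserving_equiv_real_prod.measure_preimage
      ((measurableSet_Ioi.prod measurableSet_Ioo).nullMeasurableSet)]
    rw [Measure.volume_eq_prod, Measure.prod_prod, Real.volume_Ioi, Real.volume_Ioo]
    simp
  -- conclude
  have hconst0 : ((‖lam‖₊ : ℝ≥0∞) ^ 2 * ENNReal.ofReal (Real.exp (2 * K))) ≠ 0 := by
    apply mul_ne_zero
    · simp [pow_eq_zero_iff, nnnorm_eq_zero, hlam]
    · simp [Real.exp_pos]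
  have hbig : ∫⁻ u in Φ '' s₀, g u = ⊤ := by
    rw [hchange, hnsq]
    simp only [abs_one, ENNReal.ofReal_one, one_mul]
    have hge : ∫⁻ z in s₀, ((‖lam‖₊ : ℝ≥0∞) ^ 2 * ENNReal.ofReal (Real.exp (2 * K)))
        ≤ ∫⁻ z in s₀, g (Φ z) := by
      apply setLIntegral_mono' hs₀meas
      intro z hz
      exact mul_le_mul_right (hlow z hz) _
    rw [setLIntegral_const, hvol, ENNReal.mul_top hconst0] at hge
    exact top_le_iff.mp hge
  have hmono : ∫⁻ u in Φ '' s₀, g u ≤ ∫⁻ u in Ω, g u := lintegral_mono_set himg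
  rw [hbig] at hmono
  exact top_le_iff.mp hmono

/-- **Theorem 1.3(b).** For a parabolic semigroup of positive hyperbolic step with Koenigs domain
`Ω` in the upper half-plane and `θ_Ω = Θ_Ω = θ ∈ (0,π)`, one has
`iS(0, π-θ) ∪ {0} ⊆ σ_D ⊆ iS(0, π-θ] ∪ {0}`: every `λ = ρe^{iφ}` with `ρ > 0` and
`φ ∈ (π/2, 3π/2 - θ)` has `D(e^{λh}) < ∞`, and every nonzero `λ` with `D(e^{λh}) < ∞` is of the
form `ρe^{iφ}` with `ρ > 0` and `φ ∈ (π/2, 3π/2 - θ]`. -/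
theorem dirichlet_spectrum_phs_equal_args
    (Ω : Set ℂ) (hopen : IsOpen Ω) (hsc : SimplyConnectedSpace ↥Ω)
    (hupper : Ω ⊆ {w : ℂ | 0 < w.im})
    (hconv : ConvexPosDir Ω)
    (hnostrip : ∀ a b : ℝ, ¬ Ω ⊆ {w : ℂ | a < w.im ∧ w.im < b})
    (h : ℂ → ℂ) (hKoenigs : IsKoenigsMap h Ω)
    (θ : ℝ) (hθpos : 0 < θ) (hθpi : θ < Real.pi)
    (hinner : innerArg Ω = θ) (houter : outerArg Ω = θ) :
    (∀ ρ : ℝ, 0 < ρ → ∀ φ : ℝ, Real.pi / 2 < φ → φ < 3 * Real.pi / 2 - θ →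
      dirichletIntegral
        (fun z => Complex.exp (((ρ : ℂ) * Complex.exp ((φ : ℂ) * Complex.I)) * h z)) < ⊤) ∧
    (∀ lam : ℂ, lam ≠ 0 →
      dirichletIntegral (fun z => Complex.exp (lam * h z)) < ⊤ →
      ∃ ρ : ℝ, 0 < ρ ∧ ∃ φ : ℝ, Real.pi / 2 < φ ∧ φ ≤ 3 * Real.pi / 2 - θ ∧
        lam = (ρ : ℂ) * Complex.exp ((φ : ℂ) * Complex.I)) := by
  have hΩmeas : MeasurableSet Ω := hopen.measurableSet
  constructor
  · -- Part (i)
    intro ρ hρ φ hφ1 hφ2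
    rw [key_change hKoenigs ((ρ : ℂ) * Complex.exp ((φ : ℂ) * Complex.I))]
    -- extract an outer sector
    have hBne : {θ' : ℝ | θ' ∈ Ioc 0 Real.pi ∧
        ∃ q : ℂ, Ω ⊆ (fun w => q + w) '' sector 0 θ'}.Nonempty := by
      rcases Set.eq_empty_or_nonempty {θ' : ℝ | θ' ∈ Ioc 0 Real.pi ∧
          ∃ q : ℂ, Ω ⊆ (fun w => q + w) '' sector 0 θ'} with he | hne
      · exfalso
        have h0 : outerArg Ω = 0 := by
          rw [outerArg, he, Real.sInf_empty]
        rw [houter] at h0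
        linarith
      · exact hne
    have hlt : sInf {θ' : ℝ | θ' ∈ Ioc 0 Real.pi ∧
        ∃ q : ℂ, Ω ⊆ (fun w => q + w) '' sector 0 θ'} < 3 * Real.pi / 2 - φ := by
      have : outerArg Ω < 3 * Real.pi / 2 - φ := by rw [houter]; linarith
      exact this
    obtain ⟨b, ⟨hbIoc, q, hq⟩, hblt⟩ := exists_lt_of_csInf_lt hBne hlt
    exact upper_finite hΩmeas hρ hφ1 hbIoc.1 (by linarith) hq
  · -- Part (ii)
    intro lam hlam hfin
    rw [key_change hKoenigs lam] at hfin
    have hbad : ∀ γ : ℝ, 0 ≤ γ → γ < θ → Real.cos (Complex.arg lam + γ) < 0 := by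
      intro γ hγ0 hγθ
      by_contra hge
      push_neg at hge
      have hsup : γ < sSup ({0} ∪ {θ' : ℝ | θ' ∈ Ioc 0 Real.pi ∧
          ∃ q : ℂ, (fun w => q + w) '' sector 0 θ' ⊆ Ω}) := by
        have : γ < innerArg Ω := by rw [hinner]; exact hγθ
        exact this
      have h0mem : (0:ℝ) ∈ ({0} ∪ {θ' : ℝ | θ' ∈ Ioc 0 Real.pi ∧
          ∃ q : ℂ, (fun w => q + w) '' sector 0 θ' ⊆ Ω}) := Set.mem_union_left _ rfl
      obtain ⟨x, hxA, hγx⟩ := exists_lt_of_lt_csSup ⟨0, h0mem⟩ hsup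
      rcases hxA with hx0 | ⟨hxIoc, q, hq⟩
      · rw [mem_singleton_iff] at hx0
        rw [hx0] at hγx
        linarith
      · have := divergence_lemma hlam hγ0 hγx hxIoc.2 hge hq
        rw [this] at hfin
        exact absurd hfin (lt_irrefl ⊤)
    have hφ₀mem : Complex.arg lam ∈ Ioc (-Real.pi) Real.pi := Complex.arg_mem_Ioc lam
    have hcos0 : Real.cos (Complex.arg lam) < 0 := by
      have := hbad 0 le_rfl hθpos
      simpa using this
    have hρ : 0 < ‖lam‖ := norm_pos_iff.mpr hlam
    have hrep : lam = ((‖lam‖ : ℝ) : ℂ)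
        * Complex.exp ((Complex.arg lam : ℂ) * Complex.I) :=
      (Complex.norm_mul_exp_arg_mul_I lam).symm
    rcases le_or_gt (Complex.arg lam) (Real.pi / 2) with hle | hgt
    · have hφ₀lt : Complex.arg lam < -(Real.pi / 2) := by
        by_contra hn
        push_neg at hn
        exact absurd (Real.cos_nonneg_of_mem_Icc ⟨hn, hle⟩) (not_le.mpr hcos0)
      rcases le_or_gt (Complex.arg lam) (-(Real.pi / 2) - θ) with hcase | hcase
      · refine ⟨‖lam‖, hρ, Complex.arg lam + 2 * Real.pi, ?_, by linarith, ?_⟩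
        · have := hφ₀mem.1
          linarith [Real.pi_pos]
        · conv_lhs => rw [hrep]
          rw [show (((Complex.arg lam + 2 * Real.pi : ℝ)) : ℂ) * Complex.I
              = (Complex.arg lam : ℂ) * Complex.I + 2 * (Real.pi : ℂ) * Complex.I by
                push_cast; ring, Complex.exp_add,
            show (2 : ℂ) * (Real.pi : ℂ) * Complex.I = 2 * Real.pi * Complex.I from rfl,
            Complex.exp_two_pi_mul_I, mul_one]
      · exfalso
        have hb := hbad (-(Real.pi / 2) - Complex.arg lam) (by linarith) (by linarith)
        rw [show Complex.arg lam + (-(Real.pi / 2) - Complex.arg lam) = -(Real.pi / 2) by ring,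
          Real.cos_neg, Real.cos_pi_div_two] at hb
        exact absurd hb (lt_irrefl 0)
    · rcases le_or_gt (Complex.arg lam) (3 * Real.pi / 2 - θ) with hcase | hcase
      · exact ⟨‖lam‖, hρ, Complex.arg lam, hgt, hcase, hrep⟩
      · exfalso
        have hb := hbad (3 * Real.pi / 2 - Complex.arg lam)
          (by linarith [hφ₀mem.2, Real.pi_pos]) (by linarith)
        rw [show Complex.arg lam + (3 * Real.pi / 2 - Complex.arg lam)
            = Real.pi + Real.pi / 2 by ring, Real.cos_add, Real.cos_pi_div_two,
          Real.sin_pi] at hb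
        simp at hb
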